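/- Let m ≥ 1 be an integer and let q, s₁, s₂, ζ₁, ζ₂ be nonzero complex numbers such that (q;q)_k ≠ 0, (q s₁/s₂;q)_k ≠ 0, (q s₂/s₁;q)_k ≠ 0 for 1 ≤ k ≤ m−1, and s₂ − q^k s₁ ≠ 0 for 1 ≤ k ≤ m−1. Define f₀(ζ₁,ζ₂,s₁,s₂) = (1 − ζ₂/ζ₁) Σ_{k=0}^{m−1} [(q^{1−m};q)_k (q^{1−m} s₁/s₂;q)_k / ((q;q)_k (q s₁/s₂;q)_k)] q^{mk} (ζ₂/ζ₁)^k. Then ζ₁^m f₀(ζ₁,ζ₂,s₁,s₂) is a polynomial in ζ₁, ζ₂, and it is antisymmetric under the deformed Weyl group action: ∏_{k=1}^{m−1} [(s₁ − q^k s₂)/(s₂ − q^k s₁)] · ζ₂^m f₀(ζ₂, ζ₁, s₂, s₁) = − ζ₁^m f₀(ζ₁, ζ₂, s₁, s₂). -/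

import Mathlib

/-- The q-shifted factorial `(a;q)_n = ∏_{k=0}^{n−1} (1 − a q^k)`. -/
noncomputable def qp (q a : ℂ) (n : ℕ) : ℂ := ∏ k ∈ Finset.range n, (1 - a * q ^ k)

/-- The terminating first eigenfunction at `t = q^m`:
`f₀(ζ₁,ζ₂,s₁,s₂) = (1 − ζ₂/ζ₁) ∑_{k=0}^{m−1} (q^{1−m};q)_k (q^{1−m}s₁/s₂;q)_k /
((q;q)_k (q s₁/s₂;q)_k) · q^{mk} (ζ₂/ζ₁)^k`. -/
noncomputable def f₀ (m : ℕ) (q ζ₁ ζ₂ s₁ s₂ : ℂ) : ℂ :=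
  (1 - ζ₂ / ζ₁) *
    ∑ k ∈ Finset.range m,
      qp q (q * (q ^ m)⁻¹) k * qp q (q * (q ^ m)⁻¹ * s₁ / s₂) k /
        (qp q q k * qp q (q * s₁ / s₂) k) * (q ^ m) ^ k * (ζ₂ / ζ₁) ^ k

/-- The coefficient of `(ζ₂/ζ₁)^k` in `f₀`. -/
noncomputable def cc (m : ℕ) (q t₁ t₂ : ℂ) (k : ℕ) : ℂ :=
  qp q (q * (q ^ m)⁻¹) k * qp q (q * (q ^ m)⁻¹ * t₁ / t₂) k /
    (qp q q k * qp q (q * t₁ / t₂) k) * (q ^ m) ^ k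

lemma qp_succ (q a : ℂ) (n : ℕ) : qp q a (n + 1) = qp q a n * (1 - a * q ^ n) :=
  Finset.prod_range_succ _ _

lemma cc_zero (m : ℕ) (q t₁ t₂ : ℂ) : cc m q t₁ t₂ 0 = 1 := by
  simp [cc, qp]

lemma f₀_eq (m : ℕ) (q ζ₁ ζ₂ s₁ s₂ : ℂ) :
    f₀ m q ζ₁ ζ₂ s₁ s₂ = (1 - ζ₂ / ζ₁) * ∑ k ∈ Finset.range m, cc m q s₁ s₂ k * (ζ₂ / ζ₁) ^ k :=
  rfl

lemma expand (m : ℕ) (q t₁ t₂ z₁ z₂ : ℂ) (hz₁ : z₁ ≠ 0) :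
    z₁ ^ m * f₀ m q z₁ z₂ t₁ t₂
      = (z₁ - z₂) * ∑ k ∈ Finset.range m, cc m q t₁ t₂ k * z₂ ^ k * z₁ ^ (m - 1 - k) := by
  rw [f₀_eq, Finset.mul_sum, Finset.mul_sum, Finset.mul_sum]
  refine Finset.sum_congr rfl fun k hk => ?_
  have hk' : k < m := Finset.mem_range.mp hk
  have hzm : z₁ ^ m = z₁ ^ (k + 1) * z₁ ^ (m - 1 - k) := by
    rw [← pow_add]; congr 1; omega
  rw [hzm, div_pow]
  field_simp
  ring

lemma alg1 (A B D W v s₁ X Y : ℂ) (hB : B ≠ 0) (hD : D ≠ 0) (hA : A ≠ 0)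
    (hv : v ≠ 0) (hs₁ : s₁ ≠ 0) :
    A / B * (X / v * (Y / (v * s₁)) / (D * (A / s₁)) * (W * v))
      = X * Y * W / (B * (D * v)) := by
  field_simp

lemma baseCase (m : ℕ) (hm : 1 ≤ m) (q s₁ s₂ : ℂ) (hq : q ≠ 0) (hs₁ : s₁ ≠ 0) (hs₂ : s₂ ≠ 0)
    (hQ : ∀ l : ℕ, 1 ≤ l → l ≤ m - 1 → (1 : ℂ) - q ^ l ≠ 0)
    (hA : ∀ l : ℕ, 1 ≤ l → l ≤ m - 1 → (1 : ℂ) - s₁ / s₂ * q ^ l ≠ 0)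
    (hB : ∀ l : ℕ, 1 ≤ l → l ≤ m - 1 → (1 : ℂ) - s₂ / s₁ * q ^ l ≠ 0)
    (hS : ∀ l : ℕ, 1 ≤ l → l ≤ m - 1 → s₂ - q ^ l * s₁ ≠ 0) :
    (∏ k ∈ Finset.Icc 1 (m - 1), (s₁ - q ^ k * s₂) / (s₂ - q ^ k * s₁)) * cc m q s₂ s₁ (m - 1)
      = 1 := by
  have hIcc : Finset.Icc 1 (m - 1) = Finset.Ico 1 m := by
    rw [← Finset.Ico_add_one_right_eq_Icc]; congr 1; omega
  have hGG : (∏ k ∈ Finset.Icc 1 (m - 1), (s₁ - q ^ k * s₂) / (s₂ - q ^ k * s₁)) *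
        cc m q s₂ s₁ (m - 1)
      = ∏ k ∈ Finset.range (m - 1),
          ((s₁ - q ^ (1 + k) * s₂) / (s₂ - q ^ (1 + k) * s₁) *
            ((1 - q * (q ^ m)⁻¹ * q ^ k) * (1 - q * (q ^ m)⁻¹ * s₂ / s₁ * q ^ k) /
              ((1 - q * q ^ k) * (1 - q * s₂ / s₁ * q ^ k)) * q ^ m)) := by
    rw [hIcc, Finset.prod_Ico_eq_prod_range]
    simp only [cc, qp]
    simp only [Finset.prod_mul_distrib, Finset.prod_div_distrib, Finset.prod_const,
      Finset.card_range]
  rw [hGG]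
  have hstep : ∀ k ∈ Finset.range (m - 1),
      (s₁ - q ^ (1 + k) * s₂) / (s₂ - q ^ (1 + k) * s₁) *
          ((1 - q * (q ^ m)⁻¹ * q ^ k) * (1 - q * (q ^ m)⁻¹ * s₂ / s₁ * q ^ k) /
            ((1 - q * q ^ k) * (1 - q * s₂ / s₁ * q ^ k)) * q ^ m)
        = (q ^ (m - 1 - k) - 1) * (q ^ (m - 1 - k) * s₁ - s₂) * (q * q ^ k) /
          ((s₂ - q * q ^ k * s₁) * ((1 - q * q ^ k) * q ^ (m - 1 - k))) := by
    intro k hk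
    have hk' : k < m - 1 := Finset.mem_range.mp hk
    have hw : (q : ℂ) ^ k ≠ 0 := pow_ne_zero _ hq
    have hv : (q : ℂ) ^ (m - 1 - k) ≠ 0 := pow_ne_zero _ hq
    have e1 : (q : ℂ) ^ (1 + k) = q * q ^ k := by rw [pow_add, pow_one]
    have e3 : (q : ℂ) ^ m = q * q ^ k * q ^ (m - 1 - k) := by
      rw [← pow_succ', ← pow_add]; congr 1; omega
    have l1 : (1 : ℂ) - q * (q * q ^ k * q ^ (m - 1 - k))⁻¹ * q ^ k
        = (q ^ (m - 1 - k) - 1) / q ^ (m - 1 - k) := by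
      field_simp
    have l2 : (1 : ℂ) - q * (q * q ^ k * q ^ (m - 1 - k))⁻¹ * s₂ / s₁ * q ^ k
        = (q ^ (m - 1 - k) * s₁ - s₂) / (q ^ (m - 1 - k) * s₁) := by
      field_simp
    have l3 : (1 : ℂ) - q * s₂ / s₁ * q ^ k = (s₁ - q * q ^ k * s₂) / s₁ := by
      field_simp
    have hAne : s₁ - q * q ^ k * s₂ ≠ 0 := by
      have h := hB (k + 1) (by omega) (by omega)
      have e : ((1 : ℂ) - s₂ / s₁ * q ^ (k + 1)) * s₁ = s₁ - q * q ^ k * s₂ := by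
        rw [pow_succ']; field_simp
      rw [← e]; exact mul_ne_zero h hs₁
    have hBne : s₂ - q * q ^ k * s₁ ≠ 0 := by
      have h := hS (k + 1) (by omega) (by omega); rwa [pow_succ'] at h
    have hDne : (1 : ℂ) - q * q ^ k ≠ 0 := by
      have h := hQ (k + 1) (by omega) (by omega); rwa [pow_succ'] at h
    rw [e1, e3, l1, l2, l3]
    exact alg1 _ _ _ _ _ _ _ _ hBne hDne hAne hv hs₁
  rw [Finset.prod_congr rfl hstep, Finset.prod_div_distrib]
  have hnum : ∀ k ∈ Finset.range (m - 1),
      (q ^ (m - 1 - k) - 1) * (q ^ (m - 1 - k) * s₁ - s₂) * (q * q ^ k)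
        = (s₂ - q * q ^ (m - 1 - 1 - k) * s₁) *
          ((1 - q * q ^ (m - 1 - 1 - k)) * q ^ (m - 1 - (m - 1 - 1 - k))) := by
    intro k hk
    have hk' : k < m - 1 := Finset.mem_range.mp hk
    rw [show m - 1 - (m - 1 - 1 - k) = k + 1 from by omega,
      show q * q ^ (m - 1 - 1 - k) = q ^ (m - 1 - k) from by rw [← pow_succ']; congr 1; omega,
      pow_succ']
    ring
  rw [Finset.prod_congr rfl hnum,
    Finset.prod_range_reflect (fun k => (s₂ - q * q ^ k * s₁) *
      ((1 - q * q ^ k) * q ^ (m - 1 - k))) (m - 1)]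
  refine div_self (Finset.prod_ne_zero_iff.mpr fun k hk => ?_)
  have hk' : k < m - 1 := Finset.mem_range.mp hk
  have hBne : s₂ - q * q ^ k * s₁ ≠ 0 := by
    have h := hS (k + 1) (by omega) (by omega); rwa [pow_succ'] at h
  have hDne : (1 : ℂ) - q * q ^ k ≠ 0 := by
    have h := hQ (k + 1) (by omega) (by omega); rwa [pow_succ'] at h
  exact mul_ne_zero hBne (mul_ne_zero hDne (pow_ne_zero _ hq))

lemma cc_succ (m : ℕ) (q t₁ t₂ : ℂ) (j : ℕ)
    (hd₃ : qp q q j ≠ 0) (hd₄ : qp q (q * t₁ / t₂) j ≠ 0)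
    (hd₁ : (1 : ℂ) - q * q ^ j ≠ 0) (hd₂ : (1 : ℂ) - q * t₁ / t₂ * q ^ j ≠ 0) :
    cc m q t₁ t₂ (j + 1) * ((1 - q * q ^ j) * (1 - q * t₁ / t₂ * q ^ j))
      = cc m q t₁ t₂ j *
        ((1 - q * (q ^ m)⁻¹ * q ^ j) * (1 - q * (q ^ m)⁻¹ * t₁ / t₂ * q ^ j) * q ^ m) := by
  simp only [cc, qp_succ]
  generalize qp q (q * (q ^ m)⁻¹) j = A₁
  generalize qp q (q * (q ^ m)⁻¹ * t₁ / t₂) j = A₂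
  generalize hd₃' : qp q q j = A₃ at hd₃ ⊢
  generalize hd₄' : qp q (q * t₁ / t₂) j = A₄ at hd₄ ⊢
  generalize hn₁ : (1 : ℂ) - q * (q ^ m)⁻¹ * q ^ j = n₁
  generalize hn₂ : (1 : ℂ) - q * (q ^ m)⁻¹ * t₁ / t₂ * q ^ j = n₂
  generalize hg₁ : (1 : ℂ) - q * q ^ j = d₁ at hd₁ ⊢
  generalize hg₂ : (1 : ℂ) - q * t₁ / t₂ * q ^ j = d₂ at hd₂ ⊢
  generalize (q : ℂ) ^ m = Q
  rw [pow_succ]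
  field_simp

lemma cancel_aux (C c2i c2v c1j c1j1 S S' R R' : ℂ) (hIH : C * c2v = c1j)
    (heq1 : c1j1 * S = c1j * R) (heq2 : c2v * S' = c2i * R')
    (hSS : S * S' = R * R') (hS : S ≠ 0) (hR' : R' ≠ 0) :
    C * c2i = c1j1 := by
  apply mul_right_cancel₀ (mul_ne_zero hR' hS)
  calc C * c2i * (R' * S) = C * (c2i * R') * S := by ring
    _ = C * (c2v * S') * S := by rw [← heq2]
    _ = (C * c2v) * (S' * S) := by ring
    _ = c1j * (S * S') := by rw [hIH]; ring
    _ = c1j * (R * R') := by rw [hSS]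
    _ = (c1j * R) * R' := by ring
    _ = (c1j1 * S) * R' := by rw [← heq1]
    _ = c1j1 * (R' * S) := by ring

lemma step_SS (m : ℕ) (q s₁ s₂ : ℂ) (j : ℕ) (hj1 : j + 1 ≤ m - 1) (hm : 1 ≤ m)
    (hq : q ≠ 0) (hs₁ : s₁ ≠ 0) (hs₂ : s₂ ≠ 0) :
    ((1 : ℂ) - q * q ^ j) * (1 - q * s₁ / s₂ * q ^ j) *
        ((1 - q * q ^ (m - 2 - j)) * (1 - q * s₂ / s₁ * q ^ (m - 2 - j)))
      = (1 - q * (q ^ m)⁻¹ * q ^ j) * (1 - q * (q ^ m)⁻¹ * s₁ / s₂ * q ^ j) * q ^ m *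
        ((1 - q * (q ^ m)⁻¹ * q ^ (m - 2 - j)) *
          (1 - q * (q ^ m)⁻¹ * s₂ / s₁ * q ^ (m - 2 - j)) * q ^ m) := by
  have e3 : (q : ℂ) ^ m = q * q ^ j * (q * q ^ (m - 2 - j)) := by
    rw [← pow_succ', ← pow_succ', ← pow_add]; congr 1; omega
  have hu : (q : ℂ) ^ j ≠ 0 := pow_ne_zero _ hq
  have hv : (q : ℂ) ^ (m - 2 - j) ≠ 0 := pow_ne_zero _ hq
  have la : (1 : ℂ) - q * (q * q ^ j * (q * q ^ (m - 2 - j)))⁻¹ * q ^ j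
      = (q * q ^ (m - 2 - j) - 1) / (q * q ^ (m - 2 - j)) := by
    field_simp
  have lb : (1 : ℂ) - q * (q * q ^ j * (q * q ^ (m - 2 - j)))⁻¹ * s₁ / s₂ * q ^ j
      = (q * q ^ (m - 2 - j) * s₂ - s₁) / (q * q ^ (m - 2 - j) * s₂) := by
    field_simp
  have lc : (1 : ℂ) - q * (q * q ^ j * (q * q ^ (m - 2 - j)))⁻¹ * q ^ (m - 2 - j)
      = (q * q ^ j - 1) / (q * q ^ j) := by
    field_simp
  have ld : (1 : ℂ) - q * (q * q ^ j * (q * q ^ (m - 2 - j)))⁻¹ * s₂ / s₁ * q ^ (m - 2 - j)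
      = (q * q ^ j * s₁ - s₂) / (q * q ^ j * s₁) := by
    field_simp
  have le' : (1 : ℂ) - q * s₁ / s₂ * q ^ j = (s₂ - q * q ^ j * s₁) / s₂ := by
    field_simp
  have lf : (1 : ℂ) - q * s₂ / s₁ * q ^ (m - 2 - j) = (s₁ - q * q ^ (m - 2 - j) * s₂) / s₁ := by
    field_simp
  rw [e3, la, lb, lc, ld, le', lf]
  generalize hU : q * q ^ j = U
  generalize hV : q * q ^ (m - 2 - j) = V
  have hU0 : U ≠ 0 := by rw [← hU]; exact mul_ne_zero hq hu
  have hV0 : V ≠ 0 := by rw [← hV]; exact mul_ne_zero hq hv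
  field_simp
  ring

lemma keyLemma (m : ℕ) (hm : 1 ≤ m) (q s₁ s₂ : ℂ) (hq : q ≠ 0) (hs₁ : s₁ ≠ 0) (hs₂ : s₂ ≠ 0)
    (hQ : ∀ l : ℕ, 1 ≤ l → l ≤ m - 1 → (1 : ℂ) - q ^ l ≠ 0)
    (hA : ∀ l : ℕ, 1 ≤ l → l ≤ m - 1 → (1 : ℂ) - s₁ / s₂ * q ^ l ≠ 0)
    (hB : ∀ l : ℕ, 1 ≤ l → l ≤ m - 1 → (1 : ℂ) - s₂ / s₁ * q ^ l ≠ 0)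
    (hS : ∀ l : ℕ, 1 ≤ l → l ≤ m - 1 → s₂ - q ^ l * s₁ ≠ 0) :
    ∀ j : ℕ, j ≤ m - 1 →
      (∏ k ∈ Finset.Icc 1 (m - 1), (s₁ - q ^ k * s₂) / (s₂ - q ^ k * s₁)) *
          cc m q s₂ s₁ (m - 1 - j)
        = cc m q s₁ s₂ j := by
  have hqpQ : ∀ n : ℕ, n ≤ m - 1 → qp q q n ≠ 0 := by
    intro n hn
    simp only [qp]
    refine Finset.prod_ne_zero_iff.mpr fun k hk => ?_
    have hk' : k < n := Finset.mem_range.mp hk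
    have h := hQ (k + 1) (by omega) (by omega)
    rwa [pow_succ'] at h
  have hqpA : ∀ n : ℕ, n ≤ m - 1 → qp q (q * s₁ / s₂) n ≠ 0 := by
    intro n hn
    simp only [qp]
    refine Finset.prod_ne_zero_iff.mpr fun k hk => ?_
    have hk' : k < n := Finset.mem_range.mp hk
    have e : (1 : ℂ) - q * s₁ / s₂ * q ^ k = 1 - s₁ / s₂ * q ^ (k + 1) := by
      rw [pow_succ']; ring
    rw [e]; exact hA (k + 1) (by omega) (by omega)
  have hqpB : ∀ n : ℕ, n ≤ m - 1 → qp q (q * s₂ / s₁) n ≠ 0 := by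
    intro n hn
    simp only [qp]
    refine Finset.prod_ne_zero_iff.mpr fun k hk => ?_
    have hk' : k < n := Finset.mem_range.mp hk
    have e : (1 : ℂ) - q * s₂ / s₁ * q ^ k = 1 - s₂ / s₁ * q ^ (k + 1) := by
      rw [pow_succ']; ring
    rw [e]; exact hB (k + 1) (by omega) (by omega)
  intro j
  induction j with
  | zero =>
    intro _
    simp only [Nat.sub_zero, cc_zero]
    exact baseCase m hm q s₁ s₂ hq hs₁ hs₂ hQ hA hB hS
  | succ j ih =>
    intro hj1
    have IH := ih (by omega)
    rw [show m - 1 - (j + 1) = m - 2 - j from by omega]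
    have hd₁ : (1 : ℂ) - q * q ^ j ≠ 0 := by
      have h := hQ (j + 1) (by omega) (by omega); rwa [pow_succ'] at h
    have hd₂ : (1 : ℂ) - q * s₁ / s₂ * q ^ j ≠ 0 := by
      have e : (1 : ℂ) - q * s₁ / s₂ * q ^ j = 1 - s₁ / s₂ * q ^ (j + 1) := by
        rw [pow_succ']; ring
      rw [e]; exact hA (j + 1) (by omega) (by omega)
    have hd₁' : (1 : ℂ) - q * q ^ (m - 2 - j) ≠ 0 := by
      have h := hQ (m - 1 - j) (by omega) (by omega)
      rwa [show m - 1 - j = (m - 2 - j) + 1 from by omega, pow_succ'] at h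
    have hd₂' : (1 : ℂ) - q * s₂ / s₁ * q ^ (m - 2 - j) ≠ 0 := by
      have e : (1 : ℂ) - q * s₂ / s₁ * q ^ (m - 2 - j) = 1 - s₂ / s₁ * q ^ (m - 1 - j) := by
        rw [show m - 1 - j = (m - 2 - j) + 1 from by omega, pow_succ']; ring
      rw [e]; exact hB (m - 1 - j) (by omega) (by omega)
    have eq1 := cc_succ m q s₁ s₂ j (hqpQ j (by omega)) (hqpA j (by omega)) hd₁ hd₂
    have eq2 := cc_succ m q s₂ s₁ (m - 2 - j) (hqpQ (m - 2 - j) (by omega))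
      (hqpB (m - 2 - j) (by omega)) hd₁' hd₂'
    rw [show m - 2 - j + 1 = m - 1 - j from by omega] at eq2
    have e3 : (q : ℂ) ^ m = q * q ^ j * (q * q ^ (m - 2 - j)) := by
      rw [← pow_succ', ← pow_succ', ← pow_add]; congr 1; omega
    have hu : (q : ℂ) ^ j ≠ 0 := pow_ne_zero _ hq
    have hv : (q : ℂ) ^ (m - 2 - j) ≠ 0 := pow_ne_zero _ hq
    have lc : (1 : ℂ) - q * (q ^ m)⁻¹ * q ^ (m - 2 - j) = (q * q ^ j - 1) / (q * q ^ j) := by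
      rw [e3]; field_simp
    have ld : (1 : ℂ) - q * (q ^ m)⁻¹ * s₂ / s₁ * q ^ (m - 2 - j)
        = (q * q ^ j * s₁ - s₂) / (q * q ^ j * s₁) := by
      rw [e3]; field_simp
    have hnum1 : q * q ^ j - 1 ≠ 0 := fun h => hd₁ (by linear_combination -h)
    have hnum2 : q * q ^ j * s₁ - s₂ ≠ 0 := by
      intro h
      apply mul_ne_zero hd₂ hs₂
      have e : ((1 : ℂ) - q * s₁ / s₂ * q ^ j) * s₂ = -(q * q ^ j * s₁ - s₂) := by
        field_simp; ring
      rw [e, h, neg_zero]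
    have hR' : (1 - q * (q ^ m)⁻¹ * q ^ (m - 2 - j)) *
        (1 - q * (q ^ m)⁻¹ * s₂ / s₁ * q ^ (m - 2 - j)) * q ^ m ≠ 0 := by
      rw [lc, ld]
      exact mul_ne_zero (mul_ne_zero (div_ne_zero hnum1 (mul_ne_zero hq hu))
        (div_ne_zero hnum2 (mul_ne_zero (mul_ne_zero hq hu) hs₁))) (pow_ne_zero _ hq)
    have hSne : ((1 : ℂ) - q * q ^ j) * (1 - q * s₁ / s₂ * q ^ j) ≠ 0 := mul_ne_zero hd₁ hd₂
    exact cancel_aux _ _ _ _ _ _ _ _ _ IH eq1 eq2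
      (step_SS m q s₁ s₂ j hj1 hm hq hs₁ hs₂) hSne hR'

/-- `ζ₁^m f₀(ζ₁,ζ₂,s₁,s₂)` is a polynomial in `ζ₁, ζ₂`, and it is
antisymmetric under the deformed Weyl group action `π_m(σ₁)`. -/
theorem statement4 (m : ℕ) (hm : 1 ≤ m) (q s₁ s₂ ζ₁ ζ₂ : ℂ)
    (hq : q ≠ 0) (hs₁ : s₁ ≠ 0) (hs₂ : s₂ ≠ 0) (hζ₁ : ζ₁ ≠ 0) (hζ₂ : ζ₂ ≠ 0)
    (h1 : ∀ k : ℕ, 1 ≤ k → k ≤ m - 1 → qp q q k ≠ 0)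
    (h2 : ∀ k : ℕ, 1 ≤ k → k ≤ m - 1 → qp q (q * s₁ / s₂) k ≠ 0)
    (h3 : ∀ k : ℕ, 1 ≤ k → k ≤ m - 1 → qp q (q * s₂ / s₁) k ≠ 0)
    (h4 : ∀ k : ℕ, 1 ≤ k → k ≤ m - 1 → s₂ - q ^ k * s₁ ≠ 0) :
    (∃ P : MvPolynomial (Fin 2) ℂ, ∀ z₁ z₂ : ℂ, z₁ ≠ 0 → z₂ ≠ 0 →
        MvPolynomial.eval ![z₁, z₂] P = z₁ ^ m * f₀ m q z₁ z₂ s₁ s₂) ∧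
      (∏ k ∈ Finset.Icc 1 (m - 1), (s₁ - q ^ k * s₂) / (s₂ - q ^ k * s₁)) *
          (ζ₂ ^ m * f₀ m q ζ₂ ζ₁ s₂ s₁)
        = -(ζ₁ ^ m * f₀ m q ζ₁ ζ₂ s₁ s₂) := by
  have hQ : ∀ l : ℕ, 1 ≤ l → l ≤ m - 1 → (1 : ℂ) - q ^ l ≠ 0 := by
    intro l h1l h2l
    have h := Finset.prod_ne_zero_iff.mp (by simpa [qp] using h1 l h1l h2l) (l - 1)
      (Finset.mem_range.mpr (by omega))
    rwa [show q * q ^ (l - 1) = q ^ l from by rw [← pow_succ']; congr 1; omega] at h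
  have hA : ∀ l : ℕ, 1 ≤ l → l ≤ m - 1 → (1 : ℂ) - s₁ / s₂ * q ^ l ≠ 0 := by
    intro l h1l h2l
    have h := Finset.prod_ne_zero_iff.mp (by simpa [qp] using h2 l h1l h2l) (l - 1)
      (Finset.mem_range.mpr (by omega))
    rwa [show q * s₁ / s₂ * q ^ (l - 1) = s₁ / s₂ * q ^ l from by
      rw [show q ^ l = q * q ^ (l - 1) from by rw [← pow_succ']; congr 1; omega]; ring] at h
  have hB : ∀ l : ℕ, 1 ≤ l → l ≤ m - 1 → (1 : ℂ) - s₂ / s₁ * q ^ l ≠ 0 := by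
    intro l h1l h2l
    have h := Finset.prod_ne_zero_iff.mp (by simpa [qp] using h3 l h1l h2l) (l - 1)
      (Finset.mem_range.mpr (by omega))
    rwa [show q * s₂ / s₁ * q ^ (l - 1) = s₂ / s₁ * q ^ l from by
      rw [show q ^ l = q * q ^ (l - 1) from by rw [← pow_succ']; congr 1; omega]; ring] at h
  have key := keyLemma m hm q s₁ s₂ hq hs₁ hs₂ hQ hA hB h4
  constructor
  · refine ⟨(∑ k ∈ Finset.range m, MvPolynomial.C (cc m q s₁ s₂ k) *
      MvPolynomial.X 1 ^ k * MvPolynomial.X 0 ^ (m - 1 - k)) *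
      (MvPolynomial.X 0 - MvPolynomial.X 1), fun z₁ z₂ hz₁ hz₂ => ?_⟩
    rw [expand m q s₁ s₂ z₁ z₂ hz₁]
    simp [Matrix.cons_val_zero, Matrix.cons_val_one, Matrix.head_cons]
    ring
  · rw [expand m q s₂ s₁ ζ₂ ζ₁ hζ₂, expand m q s₁ s₂ ζ₁ ζ₂ hζ₁]
    rw [show (∑ k ∈ Finset.range m, cc m q s₂ s₁ k * ζ₁ ^ k * ζ₂ ^ (m - 1 - k))
        = ∑ k ∈ Finset.range m,
            cc m q s₂ s₁ (m - 1 - k) * ζ₁ ^ (m - 1 - k) * ζ₂ ^ (m - 1 - (m - 1 - k)) from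
      (Finset.sum_range_reflect
        (fun k => cc m q s₂ s₁ k * ζ₁ ^ k * ζ₂ ^ (m - 1 - k)) m).symm]
    have hsum : (∏ k ∈ Finset.Icc 1 (m - 1), (s₁ - q ^ k * s₂) / (s₂ - q ^ k * s₁)) *
        (∑ k ∈ Finset.range m,
          cc m q s₂ s₁ (m - 1 - k) * ζ₁ ^ (m - 1 - k) * ζ₂ ^ (m - 1 - (m - 1 - k)))
        = ∑ k ∈ Finset.range m, cc m q s₁ s₂ k * ζ₂ ^ k * ζ₁ ^ (m - 1 - k) := by
      rw [Finset.mul_sum]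
      refine Finset.sum_congr rfl fun k hk => ?_
      have hk' : k < m := Finset.mem_range.mp hk
      rw [show m - 1 - (m - 1 - k) = k from by omega, ← key k (by omega)]
      ring
    calc (∏ k ∈ Finset.Icc 1 (m - 1), (s₁ - q ^ k * s₂) / (s₂ - q ^ k * s₁)) *
          ((ζ₂ - ζ₁) * ∑ k ∈ Finset.range m,
            cc m q s₂ s₁ (m - 1 - k) * ζ₁ ^ (m - 1 - k) * ζ₂ ^ (m - 1 - (m - 1 - k)))
        = (ζ₂ - ζ₁) * ((∏ k ∈ Finset.Icc 1 (m - 1), (s₁ - q ^ k * s₂) / (s₂ - q ^ k * s₁)) *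
            ∑ k ∈ Finset.range m,
              cc m q s₂ s₁ (m - 1 - k) * ζ₁ ^ (m - 1 - k) * ζ₂ ^ (m - 1 - (m - 1 - k))) := by
          ring
      _ = (ζ₂ - ζ₁) * ∑ k ∈ Finset.range m, cc m q s₁ s₂ k * ζ₂ ^ k * ζ₁ ^ (m - 1 - k) := by
          rw [hsum]
      _ = -((ζ₁ - ζ₂) * ∑ k ∈ Finset.range m, cc m q s₁ s₂ k * ζ₂ ^ k * ζ₁ ^ (m - 1 - k)) := by
          ring
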